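/- In the free graded-commutative algebra ⋀(α₁,α₂,β₁,β₂,γ₁,γ₂,η₁,η₂) on eight degree-1 generators with differential d determined by dαᵢ = dβᵢ = dγᵢ = 0, dη₁ = −β₁γ₁ + β₂γ₁ + β₁γ₂ + 2β₂γ₂, dη₂ = 2β₁γ₁ + β₂γ₁ + β₁γ₂ − β₂γ₂, the degree-2 element ω = α₁α₂ + η₂β₁ − η₁β₂ + γ₁γ₂ satisfies dω = 0 and ω⁴ ≠ 0. -/

import Mathlib

set_option maxRecDepth 10000
set_option maxHeartbeats 2000000

/-- The degree-1 generators α₁,α₂,β₁,β₂,γ₁,γ₂,η₁,η₂ of the free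
graded-commutative algebra on eight degree-1 generators, realized as the
exterior algebra of ℝ⁸ (indices 0,…,7 in that order). -/
noncomputable def gen (i : Fin 8) : ExteriorAlgebra ℝ (Fin 8 → ℝ) :=
  ExteriorAlgebra.ι ℝ (Pi.single i 1)

lemma hgen (i : Fin 8) : ExteriorAlgebra.ι ℝ (Pi.single i (1:ℝ)) = gen i := rfl

@[simp] lemma gsq (i : Fin 8) : gen i * gen i = 0 := ExteriorAlgebra.ι_sq_zero _
@[simp] lemma gsq' (i : Fin 8) (x : ExteriorAlgebra ℝ (Fin 8 → ℝ)) : gen i * (gen i * x) = 0 := by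
  rw [← mul_assoc, gsq, zero_mul]
lemma gsw (i j : Fin 8) : gen j * gen i = -(gen i * gen j) :=
  eq_neg_of_add_eq_zero_left (by rw [add_comm]; exact ExteriorAlgebra.ι_add_mul_swap _ _)
lemma gsw' (i j : Fin 8) (x : ExteriorAlgebra ℝ (Fin 8 → ℝ)) :
    gen j * (gen i * x) = -(gen i * (gen j * x)) := by
  rw [← mul_assoc, gsw, neg_mul, mul_assoc]
@[simp] lemma sw10 : gen 1 * gen 0 = -(gen 0 * gen 1) := gsw 0 1
@[simp] lemma sw10x (x : ExteriorAlgebra ℝ (Fin 8 → ℝ)) : gen 1 * (gen 0 * x) = -(gen 0 * (gen 1 * x)) := gsw' 0 1 x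
@[simp] lemma sw20 : gen 2 * gen 0 = -(gen 0 * gen 2) := gsw 0 2
@[simp] lemma sw20x (x : ExteriorAlgebra ℝ (Fin 8 → ℝ)) : gen 2 * (gen 0 * x) = -(gen 0 * (gen 2 * x)) := gsw' 0 2 x
@[simp] lemma sw30 : gen 3 * gen 0 = -(gen 0 * gen 3) := gsw 0 3
@[simp] lemma sw30x (x : ExteriorAlgebra ℝ (Fin 8 → ℝ)) : gen 3 * (gen 0 * x) = -(gen 0 * (gen 3 * x)) := gsw' 0 3 x
@[simp] lemma sw40 : gen 4 * gen 0 = -(gen 0 * gen 4) := gsw 0 4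
@[simp] lemma sw40x (x : ExteriorAlgebra ℝ (Fin 8 → ℝ)) : gen 4 * (gen 0 * x) = -(gen 0 * (gen 4 * x)) := gsw' 0 4 x
@[simp] lemma sw50 : gen 5 * gen 0 = -(gen 0 * gen 5) := gsw 0 5
@[simp] lemma sw50x (x : ExteriorAlgebra ℝ (Fin 8 → ℝ)) : gen 5 * (gen 0 * x) = -(gen 0 * (gen 5 * x)) := gsw' 0 5 x
@[simp] lemma sw60 : gen 6 * gen 0 = -(gen 0 * gen 6) := gsw 0 6
@[simp] lemma sw60x (x : ExteriorAlgebra ℝ (Fin 8 → ℝ)) : gen 6 * (gen 0 * x) = -(gen 0 * (gen 6 * x)) := gsw' 0 6 x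
@[simp] lemma sw70 : gen 7 * gen 0 = -(gen 0 * gen 7) := gsw 0 7
@[simp] lemma sw70x (x : ExteriorAlgebra ℝ (Fin 8 → ℝ)) : gen 7 * (gen 0 * x) = -(gen 0 * (gen 7 * x)) := gsw' 0 7 x
@[simp] lemma sw21 : gen 2 * gen 1 = -(gen 1 * gen 2) := gsw 1 2
@[simp] lemma sw21x (x : ExteriorAlgebra ℝ (Fin 8 → ℝ)) : gen 2 * (gen 1 * x) = -(gen 1 * (gen 2 * x)) := gsw' 1 2 x
@[simp] lemma sw31 : gen 3 * gen 1 = -(gen 1 * gen 3) := gsw 1 3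
@[simp] lemma sw31x (x : ExteriorAlgebra ℝ (Fin 8 → ℝ)) : gen 3 * (gen 1 * x) = -(gen 1 * (gen 3 * x)) := gsw' 1 3 x
@[simp] lemma sw41 : gen 4 * gen 1 = -(gen 1 * gen 4) := gsw 1 4
@[simp] lemma sw41x (x : ExteriorAlgebra ℝ (Fin 8 → ℝ)) : gen 4 * (gen 1 * x) = -(gen 1 * (gen 4 * x)) := gsw' 1 4 x
@[simp] lemma sw51 : gen 5 * gen 1 = -(gen 1 * gen 5) := gsw 1 5
@[simp] lemma sw51x (x : ExteriorAlgebra ℝ (Fin 8 → ℝ)) : gen 5 * (gen 1 * x) = -(gen 1 * (gen 5 * x)) := gsw' 1 5 x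
@[simp] lemma sw61 : gen 6 * gen 1 = -(gen 1 * gen 6) := gsw 1 6
@[simp] lemma sw61x (x : ExteriorAlgebra ℝ (Fin 8 → ℝ)) : gen 6 * (gen 1 * x) = -(gen 1 * (gen 6 * x)) := gsw' 1 6 x
@[simp] lemma sw71 : gen 7 * gen 1 = -(gen 1 * gen 7) := gsw 1 7
@[simp] lemma sw71x (x : ExteriorAlgebra ℝ (Fin 8 → ℝ)) : gen 7 * (gen 1 * x) = -(gen 1 * (gen 7 * x)) := gsw' 1 7 x
@[simp] lemma sw32 : gen 3 * gen 2 = -(gen 2 * gen 3) := gsw 2 3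
@[simp] lemma sw32x (x : ExteriorAlgebra ℝ (Fin 8 → ℝ)) : gen 3 * (gen 2 * x) = -(gen 2 * (gen 3 * x)) := gsw' 2 3 x
@[simp] lemma sw42 : gen 4 * gen 2 = -(gen 2 * gen 4) := gsw 2 4
@[simp] lemma sw42x (x : ExteriorAlgebra ℝ (Fin 8 → ℝ)) : gen 4 * (gen 2 * x) = -(gen 2 * (gen 4 * x)) := gsw' 2 4 x
@[simp] lemma sw52 : gen 5 * gen 2 = -(gen 2 * gen 5) := gsw 2 5
@[simp] lemma sw52x (x : ExteriorAlgebra ℝ (Fin 8 → ℝ)) : gen 5 * (gen 2 * x) = -(gen 2 * (gen 5 * x)) := gsw' 2 5 x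
@[simp] lemma sw62 : gen 6 * gen 2 = -(gen 2 * gen 6) := gsw 2 6
@[simp] lemma sw62x (x : ExteriorAlgebra ℝ (Fin 8 → ℝ)) : gen 6 * (gen 2 * x) = -(gen 2 * (gen 6 * x)) := gsw' 2 6 x
@[simp] lemma sw72 : gen 7 * gen 2 = -(gen 2 * gen 7) := gsw 2 7
@[simp] lemma sw72x (x : ExteriorAlgebra ℝ (Fin 8 → ℝ)) : gen 7 * (gen 2 * x) = -(gen 2 * (gen 7 * x)) := gsw' 2 7 x
@[simp] lemma sw43 : gen 4 * gen 3 = -(gen 3 * gen 4) := gsw 3 4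
@[simp] lemma sw43x (x : ExteriorAlgebra ℝ (Fin 8 → ℝ)) : gen 4 * (gen 3 * x) = -(gen 3 * (gen 4 * x)) := gsw' 3 4 x
@[simp] lemma sw53 : gen 5 * gen 3 = -(gen 3 * gen 5) := gsw 3 5
@[simp] lemma sw53x (x : ExteriorAlgebra ℝ (Fin 8 → ℝ)) : gen 5 * (gen 3 * x) = -(gen 3 * (gen 5 * x)) := gsw' 3 5 x
@[simp] lemma sw63 : gen 6 * gen 3 = -(gen 3 * gen 6) := gsw 3 6
@[simp] lemma sw63x (x : ExteriorAlgebra ℝ (Fin 8 → ℝ)) : gen 6 * (gen 3 * x) = -(gen 3 * (gen 6 * x)) := gsw' 3 6 x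
@[simp] lemma sw73 : gen 7 * gen 3 = -(gen 3 * gen 7) := gsw 3 7
@[simp] lemma sw73x (x : ExteriorAlgebra ℝ (Fin 8 → ℝ)) : gen 7 * (gen 3 * x) = -(gen 3 * (gen 7 * x)) := gsw' 3 7 x
@[simp] lemma sw54 : gen 5 * gen 4 = -(gen 4 * gen 5) := gsw 4 5
@[simp] lemma sw54x (x : ExteriorAlgebra ℝ (Fin 8 → ℝ)) : gen 5 * (gen 4 * x) = -(gen 4 * (gen 5 * x)) := gsw' 4 5 x
@[simp] lemma sw64 : gen 6 * gen 4 = -(gen 4 * gen 6) := gsw 4 6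
@[simp] lemma sw64x (x : ExteriorAlgebra ℝ (Fin 8 → ℝ)) : gen 6 * (gen 4 * x) = -(gen 4 * (gen 6 * x)) := gsw' 4 6 x
@[simp] lemma sw74 : gen 7 * gen 4 = -(gen 4 * gen 7) := gsw 4 7
@[simp] lemma sw74x (x : ExteriorAlgebra ℝ (Fin 8 → ℝ)) : gen 7 * (gen 4 * x) = -(gen 4 * (gen 7 * x)) := gsw' 4 7 x
@[simp] lemma sw65 : gen 6 * gen 5 = -(gen 5 * gen 6) := gsw 5 6
@[simp] lemma sw65x (x : ExteriorAlgebra ℝ (Fin 8 → ℝ)) : gen 6 * (gen 5 * x) = -(gen 5 * (gen 6 * x)) := gsw' 5 6 x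
@[simp] lemma sw75 : gen 7 * gen 5 = -(gen 5 * gen 7) := gsw 5 7
@[simp] lemma sw75x (x : ExteriorAlgebra ℝ (Fin 8 → ℝ)) : gen 7 * (gen 5 * x) = -(gen 5 * (gen 7 * x)) := gsw' 5 7 x
@[simp] lemma sw76 : gen 7 * gen 6 = -(gen 6 * gen 7) := gsw 6 7
@[simp] lemma sw76x (x : ExteriorAlgebra ℝ (Fin 8 → ℝ)) : gen 7 * (gen 6 * x) = -(gen 6 * (gen 7 * x)) := gsw' 6 7 x
noncomputable def Fdet : ∀ i : ℕ, (Fin 8 → ℝ) [⋀^Fin i]→ₗ[ℝ] ℝ :=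
  Function.update (fun _ => 0) 8 ((Pi.basisFun ℝ (Fin 8)).det)

lemma Fdet8 : Fdet 8 = (Pi.basisFun ℝ (Fin 8)).det := Function.update_self _ _ _

noncomputable def F : ExteriorAlgebra ℝ (Fin 8 → ℝ) →ₗ[ℝ] ℝ :=
  ExteriorAlgebra.liftAlternating Fdet

lemma mono_eq : gen 0*(gen 1*(gen 2*(gen 3*(gen 4*(gen 5*(gen 6*gen 7)))))) =
    ExteriorAlgebra.ιMulti ℝ 8 (fun i : Fin 8 => Pi.single i 1) := by
  rw [ExteriorAlgebra.ιMulti_apply]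
  simp only [List.ofFn_succ, List.ofFn_zero, List.prod_cons, List.prod_nil, hgen, mul_one]
  rfl

@[simp] lemma F_mono : F (gen 0*(gen 1*(gen 2*(gen 3*(gen 4*(gen 5*(gen 6*gen 7))))))) = 1 := by
  rw [mono_eq, F, ExteriorAlgebra.liftAlternating_apply_ιMulti, Fdet8]
  have h1 : (fun i : Fin 8 => Pi.single i (1:ℝ)) = ⇑(Pi.basisFun ℝ (Fin 8)) := by
    funext i; simp [Pi.basisFun_apply]
  rw [h1, Module.Basis.det_self]

theorem stmt_15
    (d : ExteriorAlgebra ℝ (Fin 8 → ℝ) →ₗ[ℝ] ExteriorAlgebra ℝ (Fin 8 → ℝ))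
    (hLeib : ∀ (v : Fin 8 → ℝ) (y : ExteriorAlgebra ℝ (Fin 8 → ℝ)),
      d (ExteriorAlgebra.ι ℝ v * y)
        = d (ExteriorAlgebra.ι ℝ v) * y - ExteriorAlgebra.ι ℝ v * d y)
    (hdα₁ : d (gen 0) = 0) (hdα₂ : d (gen 1) = 0)
    (hdβ₁ : d (gen 2) = 0) (hdβ₂ : d (gen 3) = 0)
    (hdγ₁ : d (gen 4) = 0) (hdγ₂ : d (gen 5) = 0)
    (hdη₁ : d (gen 6)
      = -(gen 2 * gen 4) + gen 3 * gen 4 + gen 2 * gen 5 + 2 • (gen 3 * gen 5))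
    (hdη₂ : d (gen 7)
      = 2 • (gen 2 * gen 4) + gen 3 * gen 4 + gen 2 * gen 5 - gen 3 * gen 5) :
    d (gen 0 * gen 1 + gen 7 * gen 2 - gen 6 * gen 3 + gen 4 * gen 5) = 0 ∧
    (gen 0 * gen 1 + gen 7 * gen 2 - gen 6 * gen 3 + gen 4 * gen 5) ^ 4 ≠ 0 := by
  constructor
  · have L : ∀ i : Fin 8, ∀ y, d (gen i * y) = d (gen i) * y - gen i * d y := by
      intro i y; exact hLeib (Pi.single i 1) y
    rw [map_add, map_sub, map_add, L 0, L 7, L 6, L 4, hdα₁, hdα₂, hdβ₁, hdβ₂, hdγ₁, hdγ₂,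
      hdη₁, hdη₂]
    simp [mul_add, add_mul, sub_mul, mul_sub, neg_mul, mul_neg, smul_mul_assoc, mul_smul_comm,
      mul_assoc]
    abel
  · intro h
    have h2 := congrArg F h
    rw [map_zero] at h2
    simp [pow_succ, mul_add, add_mul, sub_mul, mul_sub, neg_mul, mul_neg, mul_assoc] at h2

    norm_num at h2
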